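/- Assume m ≥ 2. For every n ≥ 1, every 2 ≤ k ≤ m, and every j ≥ 0, #{p ∈ PK(n) : ω_k(p) = j} = #{p ∈ PK(n) : luck(p) = j + 1}; that is, each statistic ω_k + 1 (for 2 ≤ k ≤ m) is equidistributed with luck on PK(n). -/

import Mathlib

open scoped Classical
open Finset

noncomputable section

/-- The set of positive nondecreasing sequences of length `n` bounded above by `b` is finite. -/
lemma boundedSeq_finite (n : ℕ) (b : ℕ → ℕ) :
    {p : Fin n → ℕ | Monotone p ∧ ∀ i : Fin n, 1 ≤ p i ∧ p i ≤ b i}.Finite := by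
  have h : {p : Fin n → ℕ | Monotone p ∧ ∀ i : Fin n, 1 ≤ p i ∧ p i ≤ b i} ⊆
      Set.pi Set.univ (fun i : Fin n => Set.Iic (b i)) := by
    intro p hp
    rw [Set.mem_pi]
    intro i _
    exact (hp.2 i).2
  exact (Set.Finite.pi fun i : Fin n => Set.finite_Iic (b (i : ℕ))).subset h

/-- The finset of nondecreasing sequences `p : Fin n → ℕ` of positive integers
with `p i ≤ b i` for all `i`. -/
def BSeq (n : ℕ) (b : ℕ → ℕ) : Finset (Fin n → ℕ) := (boundedSeq_finite n b).toFinset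

/-- `PK m n` : the u-parking distributions of length `n`, i.e. nondecreasing sequences
of positive integers with `p i ≤ m*(i-1)+1` (here indexed from `0`, so `p i ≤ m*i+1`). -/
def PK (m n : ℕ) : Finset (Fin n → ℕ) := BSeq n (fun i => m * i + 1)

/-- `luck p` : the number of indices `i` with `p i = m*(i-1)+1` (0-indexed: `m*i+1`). -/
def luck (m : ℕ) {n : ℕ} (p : Fin n → ℕ) : ℕ :=
  (Finset.univ.filter (fun i : Fin n => p i = m * (i : ℕ) + 1)).card

/-- `freq j p` = `ω_j(p)` : the number of indices `i` with `p i = j`. -/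
def freq (j : ℕ) {n : ℕ} (p : Fin n → ℕ) : ℕ :=
  (Finset.univ.filter (fun i : Fin n => p i = j)).card

/-- `hcnt m n k r` = `h_{n,k,r}` : the number of nondecreasing sequences of positive
integers with `p_i ≤ m*(i+k-1) - r` for `1 ≤ i ≤ n` (0-indexed: `p i ≤ m*(i+k) - r`). -/
def hcnt (m n k r : ℕ) : ℕ := (BSeq n (fun i => m * (i + k) - r)).card

/-- `Cnt m n k` = `C_{n,k}` : the number of `p ∈ PK m n` with `luck p = k`. -/
def Cnt (m n k : ℕ) : ℕ := ((PK m n).filter (fun p => luck m p = k)).card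

/-- `Rpoly m n` = `R_n(q) = Σ_k C_{n,k} q^k ∈ ℤ[q]`. -/
def Rpoly (m n : ℕ) : Polynomial ℤ :=
  ∑ k ∈ Finset.range (n + 1), (Cnt m n k : Polynomial ℤ) * Polynomial.X ^ k

/-- `hfull t k` : the complete homogeneous symmetric polynomial of degree `k`
in variables `q_0, …, q_{t-1}`, i.e. the sum of all monomials of total degree `k`. -/
def hfull (t k : ℕ) : MvPolynomial (Fin t) ℤ :=
  ∑ α ∈ Finset.Nat.antidiagonalTuple t k, ∏ i : Fin t, MvPolynomial.X i ^ α i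

/-- `ffix m p ℓ` = `i_ℓ(p)` : the first fixed point of type `ℓ`, the smallest `k` with
`2 ≤ k ≤ n` and `p_k ≥ m*(k-2)+1+ℓ` (1-indexed), or `n+1` if there is none. -/
def ffix (m : ℕ) {n : ℕ} (p : Fin n → ℕ) (ℓ : ℕ) : ℕ :=
  sInf ({k | 2 ≤ k ∧ ∃ i : Fin n, (i : ℕ) + 1 = k ∧ m * (k - 2) + 1 + ℓ ≤ p i} ∪ {n + 1})

/-- The extended first fixed points: `i_0 = 2`, `i_{m+1} = n+1`, and `i_ℓ = ffix m p ℓ`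
for `1 ≤ ℓ ≤ m`. -/
def ffixE (m : ℕ) {n : ℕ} (p : Fin n → ℕ) (j : ℕ) : ℕ :=
  if j = 0 then 2 else if j = m + 1 then n + 1 else ffix m p j

/-- `pget p k` = `p_k` (1-indexed), `0` out of range. -/
def pget {n : ℕ} (p : Fin n → ℕ) (k : ℕ) : ℕ := if h : k - 1 < n then p ⟨k - 1, h⟩ else 0

/-- The `(ℓ+1)`-st part `P_{ℓ+1}` (for `0 ≤ ℓ ≤ m`) of the first-return decomposition of `p`:
the list `(p_k - (p_{i_ℓ} - 1))` for `i_ℓ ≤ k ≤ i_{ℓ+1} - 1`. -/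
def FRD (m : ℕ) {n : ℕ} (p : Fin n → ℕ) (ℓ : ℕ) : List ℕ :=
  (List.range (ffixE m p (ℓ + 1) - ffixE m p ℓ)).map
    (fun t => pget p (ffixE m p ℓ + t) - (pget p (ffixE m p ℓ) - 1))

/-- A list is a u-parking distribution: nondecreasing, with `l.get i ∈ [1, m*i+1]`
(0-indexed). -/
def isPKlist (m : ℕ) (l : List ℕ) : Prop :=
  l.Pairwise (· ≤ ·) ∧ ∀ i : Fin l.length, 1 ≤ l.get i ∧ l.get i ≤ m * (i : ℕ) + 1

/-- `θ(p)` : the nondecreasing rearrangement of the concatenation of `p` with the list of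
all `j ∈ {1, …, m*n-m+1}` with `j ≢ 1 (mod m)`. -/
def theta (m n : ℕ) (p : Fin n → ℕ) : List ℕ :=
  Multiset.sort
    ((List.ofFn p : Multiset ℕ) +
      (((List.range (m * n - m + 1)).map (· + 1)).filter
        (fun j => ¬ j ≡ 1 [MOD m]) : List ℕ)) (· ≤ ·)

/-- Parking distributions on the `m`-caterpillar of length `n`, as nondecreasing lists. -/
def PKcat (m n : ℕ) : Set (List ℕ) :=
  {a | a.length = m * n - m + 1 ∧ a.Pairwise (· ≤ ·) ∧
       (∀ x ∈ a, 1 ≤ x ∧ x ≤ m * n - m + 1) ∧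
       (∀ i : ℕ, 1 ≤ i → i ≤ n →
         m * (i - 1) + 1 ≤ (a.filter (fun x => x ≤ m * (i - 1) + 1)).length) ∧
       (∀ j : ℕ, 1 ≤ j → j ≤ m * n - m + 1 → ¬ j ≡ 1 [MOD m] → j ∈ a)}

-- chunk 2 (appended to a.lean context for testing)
namespace S19

lemma mem_BSeq {n : ℕ} {b : ℕ → ℕ} {p : Fin n → ℕ} :
    p ∈ BSeq n b ↔ Monotone p ∧ ∀ i : Fin n, 1 ≤ p i ∧ p i ≤ b i :=
  (boundedSeq_finite n b).mem_toFinset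

lemma mem_PK {m n : ℕ} {p : Fin n → ℕ} :
    p ∈ PK m n ↔ Monotone p ∧ ∀ i : Fin n, 1 ≤ p i ∧ p i ≤ m * (i : ℕ) + 1 := mem_BSeq

/-- card of the set of Fin n with value < c -/
lemma card_filter_coe_lt (n c : ℕ) (hc : c ≤ n) :
    ((univ : Finset (Fin n)).filter (fun i : Fin n => (i : ℕ) < c)).card = c := by
  have h : ((univ : Finset (Fin n)).filter (fun i : Fin n => (i : ℕ) < c)).card
      = (Finset.range c).card := by
    apply Finset.card_bij (fun (i : Fin n) _ => (i : ℕ))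
    · intro a ha; simp only [mem_filter] at ha; simpa using ha.2
    · intro a ha a' ha' h; exact Fin.ext h
    · intro a ha
      simp only [Finset.mem_range] at ha
      exact ⟨⟨a, lt_of_lt_of_le ha hc⟩, by simp [ha], rfl⟩
  rw [h, Finset.card_range]

/-- downward-closed predicate on Fin n: membership iff index below card -/
lemma downward_iff {n : ℕ} {Q : Fin n → Prop} [DecidablePred Q] (hQ : ∀ i j : Fin n, i ≤ j → Q j → Q i)
    (i : Fin n) : Q i ↔ (i : ℕ) < ((univ : Finset (Fin n)).filter (fun t : Fin n => Q t)).card := by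
  constructor
  · intro hi
    have hsub : (univ : Finset (Fin n)).filter (fun t : Fin n => (t : ℕ) < (i : ℕ) + 1) ⊆
        (univ : Finset (Fin n)).filter (fun t : Fin n => Q t) := by
      intro t ht
      simp only [mem_filter, mem_univ, true_and] at ht ⊢
      exact hQ t i (by omega) hi
    have := Finset.card_le_card hsub
    rw [card_filter_coe_lt n ((i : ℕ) + 1) (by omega)] at this
    omega
  · intro hi
    by_contra hQi
    have hsub : (univ : Finset (Fin n)).filter (fun t : Fin n => Q t) ⊆
        (univ : Finset (Fin n)).filter (fun t : Fin n => (t : ℕ) < (i : ℕ)) := by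
      intro t ht
      simp only [mem_filter, mem_univ, true_and] at ht ⊢
      rcases lt_or_ge (t : ℕ) (i : ℕ) with h | h
      · exact h
      · exact absurd (hQ i t (by omega) ht) hQi
    have := Finset.card_le_card hsub
    rw [card_filter_coe_lt n (i : ℕ) (by omega)] at this
    omega

end S19

namespace S19

def dropF {d : ℕ} (p : Fin (d + 1) → ℕ) : Fin d → ℕ :=
  fun t => p ⟨(t : ℕ) + 1, by have := t.isLt; omega⟩

def consF {d : ℕ} (r : Fin d → ℕ) : Fin (d + 1) → ℕ :=
  fun i => if h : (i : ℕ) = 0 then 1 else r ⟨(i : ℕ) - 1, by have := i.isLt; omega⟩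

lemma card_BSeq_drop (d : ℕ) (b : ℕ → ℕ) (hb : b 0 = 1) :
    (BSeq (d + 1) b).card = (BSeq d (fun t => b (t + 1))).card := by
  apply Finset.card_bij' (fun p _ => dropF p) (fun r _ => consF r)
  · -- dropF maps into
    intro p hp
    rw [mem_BSeq] at hp ⊢
    refine ⟨fun t t' htt' => hp.1 ?_, fun t => ⟨(hp.2 _).1, ?_⟩⟩
    · show ((⟨(t : ℕ) + 1, _⟩ : Fin (d + 1)) ≤ ⟨(t' : ℕ) + 1, _⟩)
      simp only [Fin.mk_le_mk]
      exact Nat.add_le_add_right htt' 1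
    · exact (hp.2 _).2
  · -- consF maps into
    intro r hr
    rw [mem_BSeq] at hr ⊢
    constructor
    · intro i j hij
      unfold consF
      by_cases hi : (i : ℕ) = 0
      · by_cases hj : (j : ℕ) = 0
        · simp [hi, hj]
        · simp only [hi, hj, dif_pos, dif_neg, not_false_iff]
          exact (hr.2 _).1
      · have hj : (j : ℕ) ≠ 0 := by
          have : (i : ℕ) ≤ (j : ℕ) := hij
          omega
        simp only [hi, hj, dif_neg, not_false_iff]
        apply hr.1
        show ((i : ℕ) - 1 ≤ (j : ℕ) - 1)
        have : (i : ℕ) ≤ (j : ℕ) := hij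
        omega
    · intro i
      unfold consF
      by_cases hi : (i : ℕ) = 0
      · simp only [hi, dif_pos]
        omega
      · simp only [hi, dif_neg, not_false_iff]
        refine ⟨(hr.2 _).1, ?_⟩
        have h2 := (hr.2 ⟨(i : ℕ) - 1, by have := i.isLt; omega⟩).2
        have : (i : ℕ) - 1 + 1 = (i : ℕ) := by omega
        rwa [this] at h2
  · -- left inverse
    intro p hp
    rw [mem_BSeq] at hp
    funext i
    unfold consF dropF
    by_cases hi : (i : ℕ) = 0
    · simp only [hi, dif_pos]
      have h1 := (hp.2 i).1
      have h2 := (hp.2 i).2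
      have : i = ⟨0, by omega⟩ := Fin.ext hi
      rw [this] at h1 h2 ⊢
      simp only [Fin.val_mk] at h1 h2 ⊢
      rw [hb] at h2
      omega
    · simp only [hi, dif_neg, not_false_iff]
      congr 1
      exact Fin.ext (by simp; omega)
  · -- right inverse
    intro r hr
    funext t
    unfold consF dropF
    have : ((t : ℕ) + 1) ≠ 0 := by omega
    simp only [this, dif_neg, not_false_iff]
    exact congrArg r (Fin.ext (by simp))

/-- luck ≥ s side sets -/
def Fl (m n s : ℕ) : Finset (Fin n → ℕ) := (PK m n).filter (fun p => s ≤ luck m p)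

/-- freq ≥ j side sets -/
def Fk (m k n j : ℕ) : Finset (Fin n → ℕ) := (PK m n).filter (fun p => j ≤ freq k p)

/-- target: sorted positive length d with bound m(t+c)+1 -/
def T (m d c : ℕ) : Finset (Fin d → ℕ) := BSeq d (fun t => m * (t + c) + 1)

/-- primitive tails: sorted positive length e with bound m(t+1) -/
def U (m e : ℕ) : Finset (Fin e → ℕ) := BSeq e (fun t => m * (t + 1))

/-- primitive blocks -/
def PrimB (m i : ℕ) : Finset (Fin i → ℕ) := BSeq i (fun t => if t = 0 then 1 else m * t)

lemma card_PrimB (m i : ℕ) : (PrimB m (i + 1)).card = (U m i).card := by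
  have h := card_BSeq_drop i (fun t => if t = 0 then 1 else m * t) (by simp)
  rw [PrimB, h, U]
  have he : (fun t : ℕ => (fun t : ℕ => if t = 0 then 1 else m * t) (t + 1))
      = (fun t : ℕ => m * (t + 1)) := by funext t; simp
  rw [he]

lemma card_PK_drop (m d : ℕ) : (PK m (d + 1)).card = (T m d 1).card := by
  have h := card_BSeq_drop d (fun t => m * t + 1) (by simp)
  rw [PK, h, T]

end S19

namespace S19

lemma card_filter_eq_of_iff {n c : ℕ} {P : Fin n → Prop} (hc : c ≤ n)
    (h : ∀ i : Fin n, P i ↔ (i : ℕ) < c) :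
    ((univ : Finset (Fin n)).filter (fun i : Fin n => P i)).card = c := by
  have : (univ : Finset (Fin n)).filter (fun i : Fin n => P i)
      = (univ : Finset (Fin n)).filter (fun i : Fin n => (i : ℕ) < c) := by
    ext i; simp [h i]
  rw [this, card_filter_coe_lt n c hc]

lemma card_filter_interval (n lo len : ℕ) (h : lo + len ≤ n) :
    ((univ : Finset (Fin n)).filter
      (fun i : Fin n => lo ≤ (i : ℕ) ∧ (i : ℕ) < lo + len)).card = len := by
  have key : ((univ : Finset (Fin n)).filter
      (fun i : Fin n => lo ≤ (i : ℕ) ∧ (i : ℕ) < lo + len)).card = (Finset.range len).card := by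
    apply Finset.card_bij (fun (i : Fin n) _ => (i : ℕ) - lo)
    · intro a ha; simp only [mem_filter, mem_univ, true_and] at ha
      simp only [Finset.mem_range]; omega
    · intro a ha a' ha'
      simp only [mem_filter, mem_univ, true_and] at ha ha'
      intro hh; exact Fin.ext (by omega)
    · intro b hb
      simp only [Finset.mem_range] at hb
      refine ⟨⟨lo + b, by omega⟩, ?_, ?_⟩
      · simp only [mem_filter, mem_univ, true_and, Fin.val_mk]; omega
      · simp only [Fin.val_mk]; omega
  rw [key, Finset.card_range]

/-- count of entries < k -/
def cA (k : ℕ) {d : ℕ} (r : Fin d → ℕ) : ℕ :=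
  ((univ : Finset (Fin d)).filter (fun t : Fin d => r t < k)).card

lemma cA_le (k : ℕ) {d : ℕ} (r : Fin d → ℕ) : cA k r ≤ d := by
  have := Finset.card_filter_le (univ : Finset (Fin d)) (fun t : Fin d => r t < k)
  simpa [cA] using this

lemma lt_cA_iff {k d : ℕ} {r : Fin d → ℕ} (hr : Monotone r) (t : Fin d) :
    (t : ℕ) < cA k r ↔ r t < k := by
  rw [cA]
  exact (downward_iff (fun i j hij hj => lt_of_le_of_lt (hr hij) hj) t).symm

/-- count of entries ≤ k -/
def cB (k : ℕ) {d : ℕ} (r : Fin d → ℕ) : ℕ :=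
  ((univ : Finset (Fin d)).filter (fun t : Fin d => r t ≤ k)).card

lemma lt_cB_iff {k d : ℕ} {r : Fin d → ℕ} (hr : Monotone r) (t : Fin d) :
    (t : ℕ) < cB k r ↔ r t ≤ k := by
  rw [cB]
  exact (downward_iff (fun i j hij hj => le_trans (hr hij) hj) t).symm

lemma cA_add_freq {k n : ℕ} (p : Fin n → ℕ) : cA k p + freq k p = cB k p := by
  rw [cA, freq, cB]
  rw [← Finset.card_union_of_disjoint]
  · congr 1
    ext i
    simp only [Finset.mem_union, mem_filter, mem_univ, true_and]
    omega
  · rw [Finset.disjoint_filter]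
    intro i _ h1 h2
    omega

lemma PK_zero {m n : ℕ} {p : Fin n → ℕ} (hp : p ∈ PK m n) (h0 : 0 < n) :
    p ⟨0, h0⟩ = 1 := by
  rw [mem_PK] at hp
  have h1 := (hp.2 ⟨0, h0⟩).1
  have h2 := (hp.2 ⟨0, h0⟩).2
  simp only [Fin.val_mk] at h2
  omega

/-- insertion of j copies of k and a leading 1 -/
def insF (k j : ℕ) {d : ℕ} (r : Fin d → ℕ) : Fin (j + 1 + d) → ℕ :=
  fun i =>
    if h0 : (i : ℕ) = 0 then 1
    else if h1 : (i : ℕ) < cA k r + 1 then r ⟨(i : ℕ) - 1, by have := cA_le k r; omega⟩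
    else if h2 : (i : ℕ) < cA k r + 1 + j then k
    else r ⟨(i : ℕ) - 1 - j, by have := i.isLt; omega⟩

/-- deletion of j copies of k and the leading 1 -/
def delF (k j : ℕ) {d : ℕ} (p : Fin (j + 1 + d) → ℕ) : Fin d → ℕ :=
  fun t =>
    if (t : ℕ) + 1 < cA k p then p ⟨(t : ℕ) + 1, by have := t.isLt; omega⟩
    else p ⟨(t : ℕ) + 1 + j, by have := t.isLt; omega⟩

end S19

namespace S19

lemma card_filter_eq_of_iff' {n c : ℕ} {P : Fin n → Prop} [DecidablePred P] (hc : c ≤ n)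
    (h : ∀ i : Fin n, P i ↔ (i : ℕ) < c) :
    ((univ : Finset (Fin n)).filter (fun i : Fin n => P i)).card = c := by
  have : (univ : Finset (Fin n)).filter (fun i : Fin n => P i)
      = (univ : Finset (Fin n)).filter (fun i : Fin n => (i : ℕ) < c) := by
    ext i; simp [h i]
  rw [this, card_filter_coe_lt n c hc]

section regions
variable {k j d : ℕ} {r : Fin d → ℕ} {i : Fin (j + 1 + d)}

lemma insF_eq0 (h : (i : ℕ) = 0) : insF k j r i = 1 := by
  simp only [insF, dif_pos h]

lemma insF_eq1 (h0 : ¬((i : ℕ) = 0)) (h1 : (i : ℕ) < cA k r + 1) :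
    insF k j r i = r ⟨(i : ℕ) - 1, by have := cA_le k r; omega⟩ := by
  simp only [insF, dif_neg h0, dif_pos h1]

lemma insF_eq2 (h1 : ¬((i : ℕ) < cA k r + 1)) (h2 : (i : ℕ) < cA k r + 1 + j) :
    insF k j r i = k := by
  have h0 : ¬((i : ℕ) = 0) := by omega
  simp only [insF, dif_neg h0, dif_neg h1, dif_pos h2]

lemma insF_eq3 (h2 : ¬((i : ℕ) < cA k r + 1 + j)) :
    insF k j r i = r ⟨(i : ℕ) - 1 - j, by have := i.isLt; omega⟩ := by
  have h0 : ¬((i : ℕ) = 0) := by omega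
  have h1 : ¬((i : ℕ) < cA k r + 1) := by omega
  simp only [insF, dif_neg h0, dif_neg h1, dif_neg h2]

end regions

section dregions
variable {k j d : ℕ} {p : Fin (j + 1 + d) → ℕ} {t : Fin d}

lemma delF_lo (h : (t : ℕ) + 1 < cA k p) :
    delF k j p t = p ⟨(t : ℕ) + 1, by have := t.isLt; omega⟩ := by
  simp only [delF, if_pos h]

lemma delF_hi (h : ¬((t : ℕ) + 1 < cA k p)) :
    delF k j p t = p ⟨(t : ℕ) + 1 + j, by have := t.isLt; omega⟩ := by
  simp only [delF, if_neg h]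

end dregions

lemma T_card_eq_Fk (m k j d : ℕ) (hk2 : 2 ≤ k) (hkm : k ≤ m) :
    (T m d (j + 1)).card = (Fk m k (j + 1 + d) j).card := by
  apply Finset.card_bij' (fun r _ => insF k j r) (fun p _ => delF k j p)
  · -- insF maps into Fk
    intro r hr
    rw [T, mem_BSeq] at hr
    obtain ⟨hmono, hbd⟩ := hr
    have ha := fun t => lt_cA_iff (k := k) hmono t
    have had := cA_le k r
    rw [Fk, mem_filter, mem_PK]
    refine ⟨⟨?_, ?_⟩, ?_⟩
    · -- monotone
      intro x y hxy
      have hxy' : (x : ℕ) ≤ (y : ℕ) := hxy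
      by_cases hx0 : (x : ℕ) = 0
      · rw [insF_eq0 hx0]
        by_cases hy0 : (y : ℕ) = 0
        · rw [insF_eq0 hy0]
        · by_cases hy1 : (y : ℕ) < cA k r + 1
          · rw [insF_eq1 hy0 hy1]; exact (hbd _).1
          · by_cases hy2 : (y : ℕ) < cA k r + 1 + j
            · rw [insF_eq2 hy1 hy2]; omega
            · rw [insF_eq3 hy2]; exact (hbd _).1
      · by_cases hx1 : (x : ℕ) < cA k r + 1
        · rw [insF_eq1 hx0 hx1]
          have hy0 : ¬((y : ℕ) = 0) := by omega
          by_cases hy1 : (y : ℕ) < cA k r + 1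
          · rw [insF_eq1 hy0 hy1]
            exact hmono (by simp only [Fin.mk_le_mk]; omega)
          · by_cases hy2 : (y : ℕ) < cA k r + 1 + j
            · rw [insF_eq2 hy1 hy2]
              exact le_of_lt ((ha _).mp (by simp only [Fin.val_mk]; omega))
            · rw [insF_eq3 hy2]
              exact hmono (by simp only [Fin.mk_le_mk]; omega)
        · by_cases hx2 : (x : ℕ) < cA k r + 1 + j
          · rw [insF_eq2 hx1 hx2]
            by_cases hy2 : (y : ℕ) < cA k r + 1 + j
            · rw [insF_eq2 (by omega) hy2]
            · rw [insF_eq3 hy2]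
              refine le_of_not_gt (fun hc => ?_)
              have := (ha _).mpr hc
              simp only [Fin.val_mk] at this
              omega
          · rw [insF_eq3 hx2, insF_eq3 (by omega)]
            exact hmono (by simp only [Fin.mk_le_mk]; omega)
    · -- bounds
      intro i
      by_cases h0 : (i : ℕ) = 0
      · rw [insF_eq0 h0]; omega
      · by_cases h1 : (i : ℕ) < cA k r + 1
        · rw [insF_eq1 h0 h1]
          refine ⟨(hbd _).1, ?_⟩
          have hlt : r ⟨(i : ℕ) - 1, by omega⟩ < k := (ha _).mp (by simp only [Fin.val_mk]; omega)
          have : k ≤ m * (i : ℕ) + 1 := by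
            have : m ≤ m * (i : ℕ) := by
              have : 1 ≤ (i : ℕ) := by omega
              calc m = m * 1 := by ring
              _ ≤ m * (i : ℕ) := Nat.mul_le_mul_left m this
            omega
          omega
        · by_cases h2 : (i : ℕ) < cA k r + 1 + j
          · rw [insF_eq2 h1 h2]
            have : m ≤ m * (i : ℕ) := by
              have h' : 1 ≤ (i : ℕ) := by omega
              calc m = m * 1 := by ring
              _ ≤ m * (i : ℕ) := Nat.mul_le_mul_left m h'
            omega
          · rw [insF_eq3 h2]
            refine ⟨(hbd _).1, ?_⟩
            have hb := (hbd ⟨(i : ℕ) - 1 - j, by have := i.isLt; omega⟩).2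
            simp only [Fin.val_mk] at hb
            have he : (i : ℕ) - 1 - j + (j + 1) = (i : ℕ) := by omega
            rw [he] at hb
            exact hb
    · -- freq ≥ j
      show j ≤ freq k (insF k j r)
      rw [freq]
      have hsub : (univ : Finset (Fin (j + 1 + d))).filter
          (fun i : Fin (j + 1 + d) => cA k r + 1 ≤ (i : ℕ) ∧ (i : ℕ) < cA k r + 1 + j) ⊆
          (univ : Finset (Fin (j + 1 + d))).filter
          (fun i : Fin (j + 1 + d) => insF k j r i = k) := by
        intro i hi
        simp only [mem_filter, mem_univ, true_and] at hi ⊢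
        exact insF_eq2 (by omega) hi.2
      have hcard := Finset.card_le_card hsub
      rw [card_filter_interval (j + 1 + d) (cA k r + 1) j (by omega)] at hcard
      exact hcard
  · -- delF maps into T
    intro p hp
    rw [Fk, mem_filter, mem_PK] at hp
    obtain ⟨⟨hmono, hbd⟩, hfreq⟩ := hp
    rw [T, mem_BSeq]
    constructor
    · intro t t' htt'
      have htt'' : (t : ℕ) ≤ (t' : ℕ) := htt'
      by_cases h : (t' : ℕ) + 1 < cA k p
      · rw [delF_lo (by omega), delF_lo h]
        exact hmono (by simp only [Fin.mk_le_mk]; omega)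
      · by_cases h2 : (t : ℕ) + 1 < cA k p
        · rw [delF_lo h2, delF_hi h]
          exact hmono (by simp only [Fin.mk_le_mk]; omega)
        · rw [delF_hi h2, delF_hi h]
          exact hmono (by simp only [Fin.mk_le_mk]; omega)
    · intro t
      by_cases h : (t : ℕ) + 1 < cA k p
      · rw [delF_lo h]
        refine ⟨(hbd _).1, ?_⟩
        have hb := (hbd ⟨(t : ℕ) + 1, by have := t.isLt; omega⟩).2
        simp only [Fin.val_mk] at hb
        have : m * ((t : ℕ) + 1) ≤ m * ((t : ℕ) + (j + 1)) := Nat.mul_le_mul_left m (by omega)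
        omega
      · rw [delF_hi h]
        refine ⟨(hbd _).1, ?_⟩
        have hb := (hbd ⟨(t : ℕ) + 1 + j, by have := t.isLt; omega⟩).2
        simp only [Fin.val_mk] at hb
        have he : (t : ℕ) + 1 + j = (t : ℕ) + (j + 1) := by omega
        exact le_trans hb (le_of_eq (by rw [he]))
  · -- left inverse : delF (insF r) = r
    intro r hr
    rw [T, mem_BSeq] at hr
    obtain ⟨hmono, hbd⟩ := hr
    have ha := fun t => lt_cA_iff (k := k) hmono t
    have had := cA_le k r
    have hcA2 : cA k (insF k j r) = cA k r + 1 := by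
      rw [cA]
      apply card_filter_eq_of_iff' (by omega)
      intro i
      by_cases h0 : (i : ℕ) = 0
      · rw [insF_eq0 h0]; constructor <;> intro <;> omega
      · by_cases h1 : (i : ℕ) < cA k r + 1
        · rw [insF_eq1 h0 h1]
          have := (ha ⟨(i : ℕ) - 1, by omega⟩).mp (by simp only [Fin.val_mk]; omega)
          constructor <;> intro <;> [omega; exact this]
        · by_cases h2 : (i : ℕ) < cA k r + 1 + j
          · rw [insF_eq2 h1 h2]
            constructor <;> intro hh <;> omega
          · rw [insF_eq3 h2]
            have hge : ¬(r ⟨(i : ℕ) - 1 - j, by have := i.isLt; omega⟩ < k) := by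
              intro hc
              have := (ha _).mpr hc
              simp only [Fin.val_mk] at this
              omega
            constructor <;> intro hh <;> [exact absurd hh hge; omega]
    funext t
    by_cases hbr : (t : ℕ) + 1 < cA k (insF k j r)
    · rw [delF_lo hbr]
      rw [insF_eq1 (by simp only [Fin.val_mk]; omega) (by simp only [Fin.val_mk]; omega)]
      exact congrArg r (Fin.ext (by simp only [Fin.val_mk]; omega))
    · rw [delF_hi hbr]
      rw [insF_eq3 (by simp only [Fin.val_mk]; omega)]
      exact congrArg r (Fin.ext (by simp only [Fin.val_mk]; omega))
  · -- right inverse : insF (delF p) = p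
    intro p hp
    rw [Fk, mem_filter, mem_PK] at hp
    obtain ⟨⟨hmono, hbd⟩, hfreq⟩ := hp
    have hka := fun i => lt_cA_iff (k := k) hmono i
    have hkb := fun i => lt_cB_iff (k := k) hmono i
    have hfr : cA k p + freq k p = cB k p := cA_add_freq p
    have hcBle : cB k p ≤ j + 1 + d := by
      have := Finset.card_filter_le (univ : Finset (Fin (j + 1 + d)))
        (fun t : Fin (j + 1 + d) => p t ≤ k)
      rw [cB]; simpa using this
    have hp0 : p ⟨0, by omega⟩ = 1 := by
      have h1 := (hbd ⟨0, by omega⟩).1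
      have h2 := (hbd ⟨0, by omega⟩).2
      simp only [Fin.val_mk] at h2
      omega
    have haP1 : 1 ≤ cA k p := by
      have : p ⟨0, by omega⟩ < k := by omega
      have := (hka ⟨0, by omega⟩).mpr this
      simp only [Fin.val_mk] at this
      omega
    have haPd : cA k p + j ≤ j + 1 + d := by omega
    have hmid : ∀ i : Fin (j + 1 + d), cA k p ≤ (i : ℕ) → (i : ℕ) < cA k p + j → p i = k := by
      intro i hi1 hi2
      have hge : ¬(p i < k) := fun hc => by have := (hka i).mpr hc; omega
      have hle : p i ≤ k := (hkb i).mp (by omega)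
      omega
    have hcA3 : cA k (delF k j p) = cA k p - 1 := by
      rw [cA]
      apply card_filter_eq_of_iff' (by omega)
      intro t
      by_cases h : (t : ℕ) + 1 < cA k p
      · rw [delF_lo h]
        have := (hka ⟨(t : ℕ) + 1, by have := t.isLt; omega⟩).mp (by simp only [Fin.val_mk]; omega)
        constructor <;> intro <;> [omega; exact this]
      · rw [delF_hi h]
        have hge : ¬(p ⟨(t : ℕ) + 1 + j, by have := t.isLt; omega⟩ < k) := by
          intro hc
          have := (hka _).mpr hc
          simp only [Fin.val_mk] at this
          omega
        constructor <;> intro hh <;> [exact absurd hh hge; omega]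
    funext i
    by_cases h0 : (i : ℕ) = 0
    · rw [insF_eq0 h0]
      have : i = ⟨0, by omega⟩ := Fin.ext h0
      rw [this, hp0]
    · by_cases h1 : (i : ℕ) < cA k (delF k j p) + 1
      · rw [insF_eq1 h0 h1]
        rw [delF_lo (by simp only [Fin.val_mk]; omega)]
        exact congrArg p (Fin.ext (by simp only [Fin.val_mk]; omega))
      · by_cases h2 : (i : ℕ) < cA k (delF k j p) + 1 + j
        · rw [insF_eq2 h1 h2]
          exact (hmid i (by omega) (by omega)).symm
        · rw [insF_eq3 h2]
          rw [delF_hi (by simp only [Fin.val_mk]; omega)]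
          exact congrArg p (Fin.ext (by simp only [Fin.val_mk]; omega))

end S19

namespace S19

/-- shifted tail of p from position i -/
def restFn (m : ℕ) {n : ℕ} (p : Fin n → ℕ) (i : ℕ) : Fin (n - i) → ℕ :=
  fun u => p ⟨i + (u : ℕ), by have := u.isLt; omega⟩ - m * i

/-- gluing a primitive prefix with a shifted tail -/
def glueF (m n i : ℕ) (q : Fin i → ℕ) (rest : Fin (n - i) → ℕ) : Fin n → ℕ :=
  fun t =>
    if h : (t : ℕ) < i then q ⟨(t : ℕ), h⟩
    else rest ⟨(t : ℕ) - i, by have := t.isLt; omega⟩ + m * i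

/-- truncation -/
def truncF {n : ℕ} (p : Fin n → ℕ) (i : ℕ) : Fin i → ℕ :=
  fun t => if h : (t : ℕ) < n then p ⟨(t : ℕ), h⟩ else 0

lemma luck_le {m n : ℕ} (p : Fin n → ℕ) : luck m p ≤ n := by
  have := Finset.card_filter_le (univ : Finset (Fin n))
    (fun i : Fin n => p i = m * (i : ℕ) + 1)
  rw [luck]; simpa using this

lemma luck_split {m n : ℕ} {p : Fin n → ℕ} {i : ℕ} (h1 : 1 ≤ i) (h2 : i < n)
    (hmono : Monotone p) (hp0 : p ⟨0, by omega⟩ = 1) (hpi : p ⟨i, h2⟩ = m * i + 1)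
    (hnl : ∀ t : Fin n, 1 ≤ (t : ℕ) → (t : ℕ) < i → p t ≠ m * (t : ℕ) + 1) :
    luck m p = 1 + luck m (restFn m p i) := by
  have hmge : ∀ u : Fin (n - i), m * i + 1 ≤ p ⟨i + (u : ℕ), by have := u.isLt; omega⟩ := by
    intro u
    rw [← hpi]
    exact hmono (by simp only [Fin.mk_le_mk]; omega)
  have hemb : Function.Injective (fun u : Fin (n - i) =>
      (⟨i + (u : ℕ), by have := u.isLt; omega⟩ : Fin n)) := by
    intro u v huv
    simp only [Fin.mk.injEq] at huv
    exact Fin.ext (by omega)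
  have hset : (univ : Finset (Fin n)).filter (fun t : Fin n => p t = m * (t : ℕ) + 1)
      = insert ⟨0, by omega⟩
        (((univ : Finset (Fin (n - i))).filter
          (fun u : Fin (n - i) => restFn m p i u = m * (u : ℕ) + 1)).image
          (fun u : Fin (n - i) => (⟨i + (u : ℕ), by have := u.isLt; omega⟩ : Fin n))) := by
    ext t
    simp only [mem_filter, mem_univ, true_and, Finset.mem_insert, Finset.mem_image]
    constructor
    · intro ht
      by_cases ht0 : (t : ℕ) = 0
      · left; exact Fin.ext ht0
      · right
        have hti : i ≤ (t : ℕ) := by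
          by_contra hc
          exact hnl t (by omega) (by omega) ht
        refine ⟨⟨(t : ℕ) - i, by have := t.isLt; omega⟩, ?_, ?_⟩
        · simp only [mem_filter, mem_univ, true_and, restFn, Fin.val_mk]
          have he : i + ((t : ℕ) - i) = (t : ℕ) := by omega
          have he2 : (⟨i + ((t : ℕ) - i), by have := t.isLt; omega⟩ : Fin n) = t :=
            Fin.ext (by simp only [Fin.val_mk]; omega)
          rw [he2, ht]
          have hmm : m * (t : ℕ) = m * ((t : ℕ) - i) + m * i := by
            rw [← Nat.mul_add]; congr 1; omega
          omega
        · exact Fin.ext (by simp only [Fin.val_mk]; omega)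
    · intro ht
      rcases ht with ht | ⟨u, hu, hut⟩
      · rw [ht]; simpa using hp0
      · simp only [mem_filter, mem_univ, true_and, restFn] at hu
        have hge := hmge u
        rw [← hut]
        simp only [Fin.val_mk]
        have hmm : m * (i + (u : ℕ)) = m * i + m * (u : ℕ) := by rw [← Nat.mul_add]
        omega
  rw [luck, luck, hset]
  rw [Finset.card_insert_of_notMem, Finset.card_image_of_injective _ hemb]
  · omega
  · intro hc
    rw [Finset.mem_image] at hc
    obtain ⟨u, _, hu⟩ := hc
    have := congrArg Fin.val hu
    simp only [Fin.val_mk] at this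
    omega

end S19

namespace S19

lemma glueF_lt {m n i : ℕ} {q : Fin i → ℕ} {rest : Fin (n - i) → ℕ} {t : Fin n}
    (h : (t : ℕ) < i) : glueF m n i q rest t = q ⟨(t : ℕ), h⟩ := by
  simp only [glueF, dif_pos h]

lemma glueF_ge {m n i : ℕ} {q : Fin i → ℕ} {rest : Fin (n - i) → ℕ} {t : Fin n}
    (h : ¬((t : ℕ) < i)) :
    glueF m n i q rest t = rest ⟨(t : ℕ) - i, by have := t.isLt; omega⟩ + m * i := by
  simp only [glueF, dif_neg h]

lemma L3a (m s d : ℕ) (hm : 1 ≤ m) (hs : 1 ≤ s) :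
    (Fl m (s + 1 + d) (s + 1)).card
      = ∑ i ∈ Finset.Icc 1 (d + 1), (PrimB m i).card * (Fl m (s + 1 + d - i) s).card := by
  have hsig : ((Finset.Icc 1 (d + 1)).sigma
      (fun i => (PrimB m i) ×ˢ (Fl m (s + 1 + d - i) s))).card
      = (Fl m (s + 1 + d) (s + 1)).card := by
    apply Finset.card_bij (fun x _ => glueF m (s + 1 + d) x.1 x.2.1 x.2.2)
    · -- membership
      rintro ⟨i, q, rest⟩ hx
      simp only [Finset.mem_sigma, Finset.mem_product, Finset.mem_Icc] at hx
      obtain ⟨⟨hi1, hi2⟩, hq, hrest⟩ := hx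
      rw [PrimB, mem_BSeq] at hq
      rw [Fl, mem_filter, mem_PK] at hrest
      obtain ⟨⟨hrmono, hrbd⟩, hrluck⟩ := hrest
      obtain ⟨hqmono, hqbd⟩ := hq
      have hin : i < s + 1 + d := by omega
      have hq0 : q ⟨0, by omega⟩ = 1 := by
        have h1 := (hqbd ⟨0, by omega⟩).1
        have h2 := (hqbd ⟨0, by omega⟩).2
        simp at h2
        omega
      have hqb : ∀ t : Fin i, q t ≤ m * (t : ℕ) + 1 := by
        intro t
        have h2 := (hqbd t).2
        by_cases h0 : (t : ℕ) = 0
        · rw [if_pos h0] at h2; omega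
        · rw [if_neg h0] at h2; omega
      have hqbi : ∀ t : Fin i, q t ≤ m * i := by
        intro t
        have h2 := (hqbd t).2
        by_cases h0 : (t : ℕ) = 0
        · rw [if_pos h0] at h2
          have : 1 * 1 ≤ m * i := Nat.mul_le_mul hm hi1
          omega
        · rw [if_neg h0] at h2
          have : m * (t : ℕ) ≤ m * i := Nat.mul_le_mul_left m (le_of_lt t.isLt)
          omega
      have hrest0 : rest ⟨0, by omega⟩ = 1 := by
        have h1 := (hrbd ⟨0, by omega⟩).1
        have h2 := (hrbd ⟨0, by omega⟩).2
        simp only [Fin.val_mk] at h2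
        omega
      have hgmono : Monotone (glueF m (s + 1 + d) i q rest) := by
        intro x y hxy
        have hxy' : (x : ℕ) ≤ (y : ℕ) := hxy
        by_cases hx : (x : ℕ) < i
        · rw [glueF_lt hx]
          by_cases hy : (y : ℕ) < i
          · rw [glueF_lt hy]
            exact hqmono (by simp only [Fin.mk_le_mk]; omega)
          · rw [glueF_ge hy]
            exact le_trans (hqbi _) (Nat.le_add_left (m * i) _)
        · rw [glueF_ge hx, glueF_ge (show ¬((y : ℕ) < i) by omega)]
          have := hrmono (show (⟨(x : ℕ) - i, by have := x.isLt; omega⟩ : Fin (s + 1 + d - i))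
            ≤ ⟨(y : ℕ) - i, by have := y.isLt; omega⟩ by simp only [Fin.mk_le_mk]; omega)
          omega
      have hgbd : ∀ t : Fin (s + 1 + d),
          1 ≤ glueF m (s + 1 + d) i q rest t ∧
          glueF m (s + 1 + d) i q rest t ≤ m * (t : ℕ) + 1 := by
        intro t
        by_cases ht : (t : ℕ) < i
        · rw [glueF_lt ht]
          exact ⟨(hqbd _).1, le_trans (hqb _) (by simp only [Fin.val_mk]; exact le_refl _)⟩
        · rw [glueF_ge ht]
          constructor
          · have := (hrbd ⟨(t : ℕ) - i, by have := t.isLt; omega⟩).1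
            omega
          · have h2 := (hrbd ⟨(t : ℕ) - i, by have := t.isLt; omega⟩).2
            simp only [Fin.val_mk] at h2
            have hmm : m * ((t : ℕ) - i) + m * i = m * (t : ℕ) := by
              rw [← Nat.mul_add]; congr 1; omega
            omega
      have hrestg : restFn m (glueF m (s + 1 + d) i q rest) i = rest := by
        funext u
        rw [restFn]
        rw [glueF_ge (show ¬((⟨i + (u : ℕ), by have := u.isLt; omega⟩ :
          Fin (s + 1 + d)) : ℕ) < i by simp only [Fin.val_mk]; omega)]
        have : (⟨((⟨i + (u : ℕ), by have := u.isLt; omega⟩ : Fin (s + 1 + d)) : ℕ) - i,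
            by have := u.isLt; simp only [Fin.val_mk]; omega⟩ : Fin (s + 1 + d - i)) = u := by
          apply Fin.ext; simp only [Fin.val_mk]; omega
        rw [this]
        omega
      have hsplit := luck_split (m := m) (p := glueF m (s + 1 + d) i q rest)
        (i := i) hi1 hin hgmono ?_ ?_ ?_
      · rw [Fl, mem_filter, mem_PK]
        refine ⟨⟨hgmono, hgbd⟩, ?_⟩
        rw [hsplit, hrestg]
        omega
      · rw [glueF_lt (show ((⟨0, by omega⟩ : Fin (s + 1 + d)) : ℕ) < i by
          simp only [Fin.val_mk]; omega)]
        have : (⟨((⟨0, by omega⟩ : Fin (s + 1 + d)) : ℕ), by simp only [Fin.val_mk]; omega⟩ :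
            Fin i) = ⟨0, by omega⟩ := by apply Fin.ext; simp only [Fin.val_mk]
        rw [this, hq0]
      · rw [glueF_ge (show ¬(((⟨i, hin⟩ : Fin (s + 1 + d)) : ℕ) < i) by
          simp only [Fin.val_mk]; omega)]
        have : (⟨((⟨i, hin⟩ : Fin (s + 1 + d)) : ℕ) - i, by simp only [Fin.val_mk]; omega⟩ :
            Fin (s + 1 + d - i)) = ⟨0, by omega⟩ := by
          apply Fin.ext; simp only [Fin.val_mk]; omega
        rw [this, hrest0]
        omega
      · intro t ht1 ht2
        rw [glueF_lt ht2]
        have h2 := (hqbd ⟨(t : ℕ), ht2⟩).2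
        simp only [Fin.val_mk] at h2
        rw [if_neg (by omega : ¬((t : ℕ) = 0))] at h2
        omega
    · -- injectivity
      have key : ∀ (i1 i2 : ℕ) (hi1 : 1 ≤ i1) (hi1n : i1 < s + 1 + d) (hlt : i1 < i2),
          ∀ (q1 : Fin i1 → ℕ) (r1 : Fin (s + 1 + d - i1) → ℕ)
            (q2 : Fin i2 → ℕ) (r2 : Fin (s + 1 + d - i2) → ℕ),
          r1 ⟨0, by omega⟩ = 1 → q2 ⟨i1, hlt⟩ ≤ m * i1 →
          glueF m (s + 1 + d) i1 q1 r1 = glueF m (s + 1 + d) i2 q2 r2 → False := by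
        intro i1 i2 hi1 hi1n hlt q1 r1 q2 r2 hr10 hq2b heq
        have hval := congrFun heq ⟨i1, hi1n⟩
        rw [glueF_ge (show ¬(((⟨i1, hi1n⟩ : Fin (s + 1 + d)) : ℕ) < i1) by
          simp only [Fin.val_mk]; omega)] at hval
        rw [glueF_lt (show ((⟨i1, hi1n⟩ : Fin (s + 1 + d)) : ℕ) < i2 by
          simp only [Fin.val_mk]; omega)] at hval
        have e0 : (⟨((⟨i1, hi1n⟩ : Fin (s + 1 + d)) : ℕ) - i1, by
            simp only [Fin.val_mk]; omega⟩ : Fin (s + 1 + d - i1)) = ⟨0, by omega⟩ :=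
          Fin.ext (by simp only [Fin.val_mk]; omega)
        rw [e0, hr10] at hval
        have e1 : (⟨((⟨i1, hi1n⟩ : Fin (s + 1 + d)) : ℕ), by simp only [Fin.val_mk]; omega⟩ :
            Fin i2) = ⟨i1, hlt⟩ := Fin.ext (by simp only [Fin.val_mk])
        rw [e1] at hval
        omega
      rintro ⟨i1, q1, r1⟩ ha ⟨i2, q2, r2⟩ hb heq
      dsimp only at heq
      simp only [Finset.mem_sigma, Finset.mem_product, Finset.mem_Icc] at ha hb
      obtain ⟨⟨ha1, ha2⟩, haq, har⟩ := ha
      obtain ⟨⟨hb1, hb2⟩, hbq, hbr⟩ := hb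
      rw [Fl, mem_filter, mem_PK] at har hbr
      rw [PrimB, mem_BSeq] at haq hbq
      have hr10 : ∀ (i : ℕ) (h1 : 1 ≤ i) (h2 : i ≤ d + 1) (r : Fin (s + 1 + d - i) → ℕ),
          Monotone r → (∀ u, 1 ≤ r u ∧ r u ≤ m * (u : ℕ) + 1) → r ⟨0, by omega⟩ = 1 := by
        intro i h1 h2 r _ hrb
        have ha' := (hrb ⟨0, by omega⟩).1
        have hb' := (hrb ⟨0, by omega⟩).2
        simp only [Fin.val_mk] at hb'
        omega
      have hqB : ∀ (i : ℕ) (q : Fin i → ℕ),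
          (∀ t : Fin i, 1 ≤ q t ∧ q t ≤ if (t : ℕ) = 0 then 1 else m * (t : ℕ)) →
          ∀ (t : Fin i), 1 ≤ (t : ℕ) → q t ≤ m * (t : ℕ) := by
        intro i q hqb t ht
        have := (hqb t).2
        rw [if_neg (by omega)] at this
        exact this
      rcases lt_trichotomy i1 i2 with h | h | h
      · exact absurd (key i1 i2 ha1 (by omega) h q1 r1 q2 r2
          (hr10 i1 ha1 ha2 r1 har.1.1 har.1.2)
          (by have := hqB i2 q2 hbq.2 ⟨i1, h⟩ (by simp only [Fin.val_mk]; omega)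
              simpa using this) heq) (fun x => x)
      · subst h
        have hqe : q1 = q2 := by
          funext t
          have htn : (t : ℕ) < s + 1 + d := by have := t.isLt; omega
          have hv := congrFun heq ⟨(t : ℕ), htn⟩
          have hlt1 : ((⟨(t : ℕ), htn⟩ : Fin (s + 1 + d)) : ℕ) < i1 := t.isLt
          exact ((glueF_lt (q := q1) (rest := r1) hlt1).symm.trans
            (hv.trans (glueF_lt (q := q2) (rest := r2) hlt1)) :
            q1 ⟨((⟨(t : ℕ), htn⟩ : Fin (s + 1 + d)) : ℕ), hlt1⟩
              = q2 ⟨((⟨(t : ℕ), htn⟩ : Fin (s + 1 + d)) : ℕ), hlt1⟩)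
        have hre : r1 = r2 := by
          funext u
          have hin2 : i1 + (u : ℕ) < s + 1 + d := by have := u.isLt; omega
          have hv := congrFun heq ⟨i1 + (u : ℕ), hin2⟩
          have hge1 : ¬(((⟨i1 + (u : ℕ), hin2⟩ : Fin (s + 1 + d)) : ℕ) < i1) := by
            simp only [Fin.val_mk]; omega
          have hch := (glueF_ge (q := q1) (rest := r1) hge1).symm.trans
            (hv.trans (glueF_ge (q := q2) (rest := r2) hge1))
          have hcan := Nat.add_right_cancel hch
          have e1 : r1 ⟨((⟨i1 + (u : ℕ), hin2⟩ : Fin (s + 1 + d)) : ℕ) - i1,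
              by have := (⟨i1 + (u : ℕ), hin2⟩ : Fin (s + 1 + d)).isLt; omega⟩ = r1 u :=
            congrArg r1 (Fin.ext (by simp only [Fin.val_mk]; omega))
          have e2 : r2 ⟨((⟨i1 + (u : ℕ), hin2⟩ : Fin (s + 1 + d)) : ℕ) - i1,
              by have := (⟨i1 + (u : ℕ), hin2⟩ : Fin (s + 1 + d)).isLt; omega⟩ = r2 u :=
            congrArg r2 (Fin.ext (by simp only [Fin.val_mk]; omega))
          exact e1.symm.trans (hcan.trans e2)
        exact congrArg (Sigma.mk i1) (by rw [hqe, hre])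
      · exact absurd (key i2 i1 hb1 (by omega) h q2 r2 q1 r1
          (hr10 i2 hb1 hb2 r2 hbr.1.1 hbr.1.2)
          (by have := hqB i1 q1 haq.2 ⟨i2, h⟩ (by simp only [Fin.val_mk]; omega)
              simpa using this) heq.symm) (fun x => x)
    · -- surjectivity
      intro p hp
      rw [Fl, mem_filter, mem_PK] at hp
      obtain ⟨⟨hmono, hbd⟩, hluck⟩ := hp
      have hn0 : 0 < s + 1 + d := by omega
      have hp0 : p ⟨0, hn0⟩ = 1 := by
        have h1 := (hbd ⟨0, hn0⟩).1
        have h2 := (hbd ⟨0, hn0⟩).2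
        simp only [Fin.val_mk] at h2
        omega
      have hne : {t : ℕ | ∃ ht : t < s + 1 + d, 1 ≤ t ∧ p ⟨t, ht⟩ = m * t + 1}.Nonempty := by
        by_contra hc
        rw [Set.not_nonempty_iff_eq_empty] at hc
        have hsub : (univ : Finset (Fin (s + 1 + d))).filter
            (fun t : Fin (s + 1 + d) => p t = m * (t : ℕ) + 1) ⊆
            (univ : Finset (Fin (s + 1 + d))).filter
            (fun t : Fin (s + 1 + d) => (t : ℕ) < 1) := by
          intro t ht
          simp only [mem_filter, mem_univ, true_and] at ht ⊢
          by_contra h1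
          have : (t : ℕ) ∈ {t : ℕ | ∃ ht : t < s + 1 + d, 1 ≤ t ∧ p ⟨t, ht⟩ = m * t + 1} := by
            refine ⟨t.isLt, by omega, ?_⟩
            have : (⟨(t : ℕ), t.isLt⟩ : Fin (s + 1 + d)) = t := Fin.ext rfl
            rw [this]; exact ht
          rw [hc] at this
          exact this
        have hcard := Finset.card_le_card hsub
        rw [card_filter_coe_lt _ 1 (by omega)] at hcard
        rw [luck] at hluck
        omega
      set i := sInf {t : ℕ | ∃ ht : t < s + 1 + d, 1 ≤ t ∧ p ⟨t, ht⟩ = m * t + 1} with hidef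
      have hiS := Nat.sInf_mem hne
      obtain ⟨hin, hi1, hlucky⟩ := hiS
      have hmin : ∀ t : ℕ, t < i →
          ¬(∃ ht : t < s + 1 + d, 1 ≤ t ∧ p ⟨t, ht⟩ = m * t + 1) := by
        intro t ht
        exact Nat.notMem_of_lt_sInf ht
      have hnl : ∀ t : Fin (s + 1 + d), 1 ≤ (t : ℕ) → (t : ℕ) < i →
          p t ≠ m * (t : ℕ) + 1 := by
        intro t h1 h2 hcon
        apply hmin (t : ℕ) h2
        refine ⟨t.isLt, h1, ?_⟩
        have : (⟨(t : ℕ), t.isLt⟩ : Fin (s + 1 + d)) = t := Fin.ext rfl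
        rw [this]; exact hcon
      have hsplit := luck_split (m := m) (p := p) (i := i) hi1 hin hmono hp0 hlucky hnl
      have hrle := luck_le (m := m) (restFn m p i)
      have hid : i ≤ d + 1 := by omega
      have hpgei : ∀ u : Fin (s + 1 + d - i), m * i + 1 ≤
          p ⟨i + (u : ℕ), by have := u.isLt; omega⟩ := by
        intro u
        rw [← hlucky]
        exact hmono (by simp only [Fin.mk_le_mk]; omega)
      refine ⟨⟨i, (truncF p i, restFn m p i)⟩, ?_, ?_⟩
      · simp only [Finset.mem_sigma, Finset.mem_product, Finset.mem_Icc]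
        refine ⟨⟨hi1, hid⟩, ?_, ?_⟩
        · rw [PrimB, mem_BSeq]
          constructor
          · intro x y hxy
            have hxn : (x : ℕ) < s + 1 + d := by have := x.isLt; omega
            have hyn : (y : ℕ) < s + 1 + d := by have := y.isLt; omega
            simp only [truncF]
            rw [dif_pos hxn, dif_pos hyn]
            exact hmono (by simp only [Fin.mk_le_mk]; exact hxy)
          · intro t
            have htn : (t : ℕ) < s + 1 + d := by have := t.isLt; omega
            simp only [truncF]
            rw [dif_pos htn]
            refine ⟨(hbd _).1, ?_⟩
            by_cases h0 : (t : ℕ) = 0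
            · rw [if_pos h0]
              have h2 := (hbd ⟨(t : ℕ), htn⟩).2
              simp only [Fin.val_mk] at h2
              have h0' : m * (t : ℕ) = 0 := by rw [h0, Nat.mul_zero]
              omega
            · rw [if_neg h0]
              have h2 := (hbd ⟨(t : ℕ), htn⟩).2
              have h3 := hnl ⟨(t : ℕ), htn⟩ (by simp only [Fin.val_mk]; omega)
                (by simp only [Fin.val_mk]; exact t.isLt)
              simp only [Fin.val_mk] at h2 h3
              omega
        · rw [Fl, mem_filter, mem_PK]
          refine ⟨⟨?_, ?_⟩, by omega⟩
          · intro x y hxy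
            simp only [restFn]
            exact Nat.sub_le_sub_right (hmono (by simp only [Fin.mk_le_mk]; omega)) (m * i)
          · intro u
            simp only [restFn]
            have h1 := hpgei u
            have h2 := (hbd ⟨i + (u : ℕ), by have := u.isLt; omega⟩).2
            simp only [Fin.val_mk] at h2
            have hmm : m * (i + (u : ℕ)) = m * i + m * (u : ℕ) := by rw [← Nat.mul_add]
            omega
      · funext t
        by_cases ht : (t : ℕ) < i
        · rw [glueF_lt ht]
          simp only [truncF]
          have htn : ((⟨(t : ℕ), ht⟩ : Fin i) : ℕ) < s + 1 + d := by
            simp only [Fin.val_mk]; have := t.isLt; omega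
          rw [dif_pos htn]
        · rw [glueF_ge ht]
          simp only [restFn]
          have h1 : m * i + 1 ≤ p t := by
            rw [← hlucky]
            exact hmono (by simp only [Fin.le_def, Fin.val_mk]; omega)
          have he : p ⟨i + ((⟨(t : ℕ) - i, by have := t.isLt; omega⟩ :
              Fin (s + 1 + d - i)) : ℕ), by have := t.isLt; simp only [Fin.val_mk]; omega⟩
              = p t := congrArg p (Fin.ext (by simp only [Fin.val_mk]; omega))
          rw [he]
          omega
  rw [← hsig, Finset.card_sigma]
  exact Finset.sum_congr rfl fun i _ => Finset.card_product _ _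

end S19

namespace S19

def glueG (m d e : ℕ) (w : Fin e → ℕ) (v : Fin (d - e) → ℕ) : Fin d → ℕ :=
  fun t =>
    if h : (t : ℕ) < e then w ⟨(t : ℕ), h⟩
    else v ⟨(t : ℕ) - e, by have := t.isLt; omega⟩ + m * (e + 1)

lemma glueG_lt {m d e : ℕ} {w : Fin e → ℕ} {v : Fin (d - e) → ℕ} {t : Fin d}
    (h : (t : ℕ) < e) : glueG m d e w v t = w ⟨(t : ℕ), h⟩ := by
  simp only [glueG, dif_pos h]

lemma glueG_ge {m d e : ℕ} {w : Fin e → ℕ} {v : Fin (d - e) → ℕ} {t : Fin d}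
    (h : ¬((t : ℕ) < e)) :
    glueG m d e w v t = v ⟨(t : ℕ) - e, by have := t.isLt; omega⟩ + m * (e + 1) := by
  simp only [glueG, dif_neg h]

set_option maxHeartbeats 1000000 in
lemma L3b (m s d : ℕ) :
    ((Finset.range (d + 1)).sigma (fun e => (U m e) ×ˢ (T m (d - e) s))).card
      = (T m d (s + 1)).card := by
  apply Finset.card_bij (fun x _ => glueG m d x.1 x.2.1 x.2.2)
  · -- membership
    rintro ⟨e, w, v⟩ hx
    dsimp only
    simp only [Finset.mem_sigma, Finset.mem_product, Finset.mem_range] at hx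
    obtain ⟨he, hw, hv⟩ := hx
    rw [U, mem_BSeq] at hw
    rw [T, mem_BSeq] at hv
    obtain ⟨hwmono, hwbd⟩ := hw
    obtain ⟨hvmono, hvbd⟩ := hv
    rw [T, mem_BSeq]
    constructor
    · intro x y hxy
      have hxy' : (x : ℕ) ≤ (y : ℕ) := hxy
      by_cases hx : (x : ℕ) < e
      · rw [glueG_lt hx]
        by_cases hy : (y : ℕ) < e
        · rw [glueG_lt hy]
          exact hwmono (by simp only [Fin.mk_le_mk]; omega)
        · rw [glueG_ge hy]
          have h1 := (hwbd ⟨(x : ℕ), hx⟩).2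
          simp only [Fin.val_mk] at h1
          have h2 : m * ((x : ℕ) + 1) ≤ m * (e + 1) := Nat.mul_le_mul_left m (by omega)
          omega
      · rw [glueG_ge hx, glueG_ge (show ¬((y : ℕ) < e) by omega)]
        have := hvmono (show (⟨(x : ℕ) - e, by have := x.isLt; omega⟩ : Fin (d - e))
          ≤ ⟨(y : ℕ) - e, by have := y.isLt; omega⟩ by simp only [Fin.mk_le_mk]; omega)
        omega
    · intro t
      by_cases ht : (t : ℕ) < e
      · rw [glueG_lt ht]
        refine ⟨(hwbd _).1, ?_⟩
        have h1 := (hwbd ⟨(t : ℕ), ht⟩).2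
        simp only [Fin.val_mk] at h1
        have h2 : m * ((t : ℕ) + 1) ≤ m * ((t : ℕ) + (s + 1)) := Nat.mul_le_mul_left m (by omega)
        omega
      · rw [glueG_ge ht]
        constructor
        · have := (hvbd ⟨(t : ℕ) - e, by have := t.isLt; omega⟩).1
          omega
        · have h1 := (hvbd ⟨(t : ℕ) - e, by have := t.isLt; omega⟩).2
          simp only [Fin.val_mk] at h1
          have hmm : m * ((t : ℕ) - e + s) + m * (e + 1) = m * ((t : ℕ) + (s + 1)) := by
            rw [← Nat.mul_add]; congr 1; omega
          omega
  · -- injectivity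
    have key : ∀ (e1 e2 : ℕ) (he1d : e1 < d) (hlt : e1 < e2)
        (w1 : Fin e1 → ℕ) (v1 : Fin (d - e1) → ℕ)
        (w2 : Fin e2 → ℕ) (v2 : Fin (d - e2) → ℕ),
        1 ≤ v1 ⟨0, by omega⟩ → w2 ⟨e1, hlt⟩ ≤ m * (e1 + 1) →
        glueG m d e1 w1 v1 = glueG m d e2 w2 v2 → False := by
      intro e1 e2 he1d hlt w1 v1 w2 v2 hv1 hw2 heq
      have hval := congrFun heq ⟨e1, he1d⟩
      have hgeA : ¬(((⟨e1, he1d⟩ : Fin d) : ℕ) < e1) := by simp only [Fin.val_mk]; omega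
      have hltB : ((⟨e1, he1d⟩ : Fin d) : ℕ) < e2 := by simp only [Fin.val_mk]; omega
      have h1 := (glueG_ge (w := w1) (v := v1) hgeA).symm.trans
        (hval.trans (glueG_lt (w := w2) (v := v2) hltB))
      have e0 : v1 ⟨((⟨e1, he1d⟩ : Fin d) : ℕ) - e1, by simp only [Fin.val_mk]; omega⟩
          = v1 ⟨0, by omega⟩ := congrArg v1 (Fin.ext (by simp only [Fin.val_mk]; omega))
      have e1' : w2 ⟨((⟨e1, he1d⟩ : Fin d) : ℕ), hltB⟩
          = w2 ⟨e1, hlt⟩ := congrArg w2 (Fin.ext (by simp only [Fin.val_mk]))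
      have h2 : v1 ⟨0, by omega⟩ + m * (e1 + 1) = w2 ⟨e1, hlt⟩ :=
        (congrArg (fun z => z + m * (e1 + 1)) e0).symm.trans (h1.trans e1')
      omega
    rintro ⟨e1, w1, v1⟩ ha ⟨e2, w2, v2⟩ hb heq
    dsimp only at heq
    simp only [Finset.mem_sigma, Finset.mem_product, Finset.mem_range] at ha hb
    obtain ⟨ha1, haw, hav⟩ := ha
    obtain ⟨hb1, hbw, hbv⟩ := hb
    rw [T, mem_BSeq] at hav hbv
    rw [U, mem_BSeq] at haw hbw
    rcases lt_trichotomy e1 e2 with h | h | h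
    · refine absurd (key e1 e2 (by omega) h w1 v1 w2 v2 ?_ ?_ heq) (fun x => x)
      · exact (hav.2 ⟨0, by omega⟩).1
      · have := (hbw.2 ⟨e1, h⟩).2
        simpa using this
    · subst h
      have hwe : w1 = w2 := by
        funext t
        have htn : (t : ℕ) < d := by have := t.isLt; omega
        have hv := congrFun heq ⟨(t : ℕ), htn⟩
        have hlt1 : ((⟨(t : ℕ), htn⟩ : Fin d) : ℕ) < e1 := t.isLt
        exact ((glueG_lt (w := w1) (v := v1) hlt1).symm.trans
          (hv.trans (glueG_lt (w := w2) (v := v2) hlt1)) :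
          w1 ⟨((⟨(t : ℕ), htn⟩ : Fin d) : ℕ), hlt1⟩
            = w2 ⟨((⟨(t : ℕ), htn⟩ : Fin d) : ℕ), hlt1⟩)
      have hve : v1 = v2 := by
        funext u
        have hin2 : e1 + (u : ℕ) < d := by have := u.isLt; omega
        have hv := congrFun heq ⟨e1 + (u : ℕ), hin2⟩
        have hge1 : ¬(((⟨e1 + (u : ℕ), hin2⟩ : Fin d) : ℕ) < e1) := by
          simp only [Fin.val_mk]; omega
        have hch := (glueG_ge (w := w1) (v := v1) hge1).symm.trans
          (hv.trans (glueG_ge (w := w2) (v := v2) hge1))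
        have hcan := Nat.add_right_cancel hch
        have e1' : v1 ⟨((⟨e1 + (u : ℕ), hin2⟩ : Fin d) : ℕ) - e1,
            by have := (⟨e1 + (u : ℕ), hin2⟩ : Fin d).isLt; omega⟩ = v1 u :=
          congrArg v1 (Fin.ext (by simp only [Fin.val_mk]; omega))
        have e2' : v2 ⟨((⟨e1 + (u : ℕ), hin2⟩ : Fin d) : ℕ) - e1,
            by have := (⟨e1 + (u : ℕ), hin2⟩ : Fin d).isLt; omega⟩ = v2 u :=
          congrArg v2 (Fin.ext (by simp only [Fin.val_mk]; omega))
        exact e1'.symm.trans (hcan.trans e2')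
      exact congrArg (Sigma.mk e1) (by rw [hwe, hve])
    · refine absurd (key e2 e1 (by omega) h w2 v2 w1 v1 ?_ ?_ heq.symm) (fun x => x)
      · exact (hbv.2 ⟨0, by omega⟩).1
      · have := (haw.2 ⟨e2, h⟩).2
        simpa using this
  · -- surjectivity
    intro u hu
    rw [T, mem_BSeq] at hu
    obtain ⟨hmono, hbd⟩ := hu
    have hne : ({t : ℕ | ∃ ht : t < d, m * (t + 1) + 1 ≤ u ⟨t, ht⟩} ∪ {d}).Nonempty :=
      ⟨d, Or.inr rfl⟩
    set e := sInf ({t : ℕ | ∃ ht : t < d, m * (t + 1) + 1 ≤ u ⟨t, ht⟩} ∪ {d}) with hedef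
    have heE := Nat.sInf_mem hne
    have hed : e ≤ d := by
      rcases heE with h | h
      · obtain ⟨ht, _⟩ := h; omega
      · simp only [Set.mem_singleton_iff] at h; omega
    have hexc : ∀ h : e < d, m * (e + 1) + 1 ≤ u ⟨e, h⟩ := by
      intro h
      rcases heE with hh | hh
      · obtain ⟨ht, hht⟩ := hh; exact hht
      · simp only [Set.mem_singleton_iff] at hh; omega
    have hmin : ∀ t : ℕ, ∀ ht : t < d, t < e → u ⟨t, ht⟩ ≤ m * (t + 1) := by
      intro t ht hte
      have := Nat.notMem_of_lt_sInf (s := {t : ℕ | ∃ ht : t < d, m * (t + 1) + 1 ≤ u ⟨t, ht⟩}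
        ∪ {d}) (by rw [← hedef]; exact hte)
      simp only [Set.mem_union, Set.mem_setOf_eq, Set.mem_singleton_iff, not_or] at this
      have h2 := this.1
      push_neg at h2
      have := h2 ht
      omega
    have hgeu : ∀ (t : ℕ) (ht : t < d), e ≤ t → m * (e + 1) + 1 ≤ u ⟨t, ht⟩ := by
      intro t ht het
      have hed2 : e < d := by omega
      have := hexc hed2
      have hm2 : u ⟨e, hed2⟩ ≤ u ⟨t, ht⟩ := hmono (by simp only [Fin.mk_le_mk]; omega)
      omega
    refine ⟨⟨e, (truncF u e, fun x : Fin (d - e) =>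
      u ⟨e + (x : ℕ), by have := x.isLt; omega⟩ - m * (e + 1))⟩, ?_, ?_⟩
    · simp only [Finset.mem_sigma, Finset.mem_product, Finset.mem_range]
      refine ⟨by omega, ?_, ?_⟩
      · rw [U, mem_BSeq]
        constructor
        · intro x y hxy
          have hxn : (x : ℕ) < d := by have := x.isLt; omega
          have hyn : (y : ℕ) < d := by have := y.isLt; omega
          simp only [truncF]
          rw [dif_pos hxn, dif_pos hyn]
          exact hmono (by simp only [Fin.mk_le_mk]; exact hxy)
        · intro t
          have htn : (t : ℕ) < d := by have := t.isLt; omega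
          simp only [truncF]
          rw [dif_pos htn]
          exact ⟨(hbd _).1, hmin (t : ℕ) htn t.isLt⟩
      · rw [T, mem_BSeq]
        constructor
        · intro x y hxy
          exact Nat.sub_le_sub_right (hmono (by simp only [Fin.mk_le_mk]; omega)) (m * (e + 1))
        · intro x
          have hxn : e + (x : ℕ) < d := by have := x.isLt; omega
          have h1 := hgeu (e + (x : ℕ)) hxn (by omega)
          have h2 := (hbd ⟨e + (x : ℕ), hxn⟩).2
          simp only [Fin.val_mk] at h2
          refine ⟨by omega, ?_⟩
          have hmm : m * ((x : ℕ) + s) + m * (e + 1) = m * (e + (x : ℕ) + (s + 1)) := by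
            rw [← Nat.mul_add]; congr 1; omega
          omega
    · dsimp only
      funext t
      by_cases ht : (t : ℕ) < e
      · rw [glueG_lt ht]
        simp only [truncF]
        have htn : ((⟨(t : ℕ), ht⟩ : Fin e) : ℕ) < d := by
          simp only [Fin.val_mk]; have := t.isLt; omega
        rw [dif_pos htn]
      · rw [glueG_ge ht]
        have h1 : m * (e + 1) + 1 ≤ u t := hgeu (t : ℕ) t.isLt (by omega)
        have he2 : u ⟨e + (((⟨(t : ℕ) - e, by have := t.isLt; omega⟩ : Fin (d - e))) : ℕ),
            by have := t.isLt; simp only [Fin.val_mk]; omega⟩ = u t :=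
          congrArg u (Fin.ext (by simp only [Fin.val_mk]; omega))
        rw [he2]
        omega

end S19

namespace S19

lemma sum_Icc_one (f : ℕ → ℕ) (d : ℕ) :
    ∑ i ∈ Finset.Icc 1 (d + 1), f i = ∑ e ∈ Finset.range (d + 1), f (e + 1) := by
  refine Finset.sum_bij' (fun i _ => i - 1) (fun e _ => e + 1) ?_ ?_ ?_ ?_ ?_
  · intro a ha
    simp only [Finset.mem_Icc] at ha
    simp only [Finset.mem_range]
    omega
  · intro a ha
    simp only [Finset.mem_range] at ha
    simp only [Finset.mem_Icc]
    omega
  · intro a ha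
    simp only [Finset.mem_Icc] at ha
    omega
  · intro a ha
    omega
  · intro a ha
    simp only [Finset.mem_Icc] at ha
    congr 1
    omega

lemma luck_pos {m n : ℕ} {p : Fin n → ℕ} (hp : p ∈ PK m n) (hn : 0 < n) :
    1 ≤ luck m p := by
  rw [luck]
  refine Finset.card_pos.mpr ⟨⟨0, hn⟩, ?_⟩
  simp only [mem_filter, mem_univ, true_and, Fin.val_mk]
  rw [PK_zero hp hn]
  omega

lemma Fl_one (m d : ℕ) : Fl m (1 + d) 1 = PK m (1 + d) := by
  rw [Fl]
  apply Finset.filter_true_of_mem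
  intro p hp
  exact luck_pos hp (by omega)

lemma Fl_empty (m n s : ℕ) (h : n < s) : Fl m n s = ∅ := by
  rw [Fl]
  apply Finset.filter_false_of_mem
  intro p _
  have := luck_le (m := m) p
  omega

lemma Fk_empty (m k n j : ℕ) (hk2 : 2 ≤ k) (hn : 1 ≤ n) (h : n ≤ j) : Fk m k n j = ∅ := by
  rw [Fk]
  apply Finset.filter_false_of_mem
  intro p hp
  have hp0 : p ⟨0, by omega⟩ = 1 := PK_zero hp (by omega)
  have hfr : freq k p ≤ n - 1 := by
    rw [freq]
    have hsub : (univ : Finset (Fin n)).filter (fun i : Fin n => p i = k) ⊆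
        (univ : Finset (Fin n)).filter (fun i : Fin n => 1 ≤ (i : ℕ)) := by
      intro i hi
      simp only [mem_filter, mem_univ, true_and] at hi ⊢
      by_contra hc
      have : i = ⟨0, by omega⟩ := Fin.ext (by simp only [Fin.val_mk]; omega)
      rw [this, hp0] at hi
      omega
    have hcard := Finset.card_le_card hsub
    have hc1 : ((univ : Finset (Fin n)).filter (fun i : Fin n => (i : ℕ) < 1)).card = 1 :=
      card_filter_coe_lt n 1 (by omega)
    have heq : (univ : Finset (Fin n)).filter (fun i : Fin n => 1 ≤ (i : ℕ))
        = (univ : Finset (Fin n)).filter (fun i : Fin n => ¬((i : ℕ) < 1)) := by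
      ext i
      simp only [mem_filter, mem_univ, true_and]
      omega
    have htot := Finset.card_filter_add_card_filter_not
      (s := (univ : Finset (Fin n))) (p := fun i : Fin n => (i : ℕ) < 1)
    simp only [Finset.card_univ, Fintype.card_fin] at htot
    rw [heq] at hcard
    omega
  omega

/-- The main luck-side counting lemma -/
lemma Llem (m : ℕ) (hm : 1 ≤ m) (s : ℕ) (hs : 1 ≤ s) :
    ∀ d, (Fl m (s + d) s).card = (T m d s).card := by
  induction s, hs using Nat.le_induction with
  | base =>
    intro d
    rw [Fl_one m d]
    have h1 : 1 + d = d + 1 := by omega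
    rw [h1, card_PK_drop]
  | succ s hs ih =>
    intro d
    have h1 : (Fl m (s + 1 + d) (s + 1)).card
        = ∑ i ∈ Finset.Icc 1 (d + 1), (PrimB m i).card * (Fl m (s + 1 + d - i) s).card :=
      L3a m s d hm hs
    rw [h1, sum_Icc_one (fun i => (PrimB m i).card * (Fl m (s + 1 + d - i) s).card) d]
    have h2 : ∀ e ∈ Finset.range (d + 1),
        (PrimB m (e + 1)).card * (Fl m (s + 1 + d - (e + 1)) s).card
          = (U m e).card * (T m (d - e) s).card := by
      intro e he
      simp only [Finset.mem_range] at he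
      rw [card_PrimB]
      have h3 : s + 1 + d - (e + 1) = s + (d - e) := by omega
      rw [h3, ih (d - e)]
    rw [Finset.sum_congr rfl h2]
    have h4 : ((Finset.range (d + 1)).sigma (fun e => (U m e) ×ˢ (T m (d - e) s))).card
        = ∑ e ∈ Finset.range (d + 1), (U m e).card * (T m (d - e) s).card := by
      rw [Finset.card_sigma]
      exact Finset.sum_congr rfl fun e _ => Finset.card_product _ _
    rw [← h4, L3b m s d]

lemma card_split {α : Type*} (s : Finset α) (f : α → ℕ) (j : ℕ) :
    (s.filter (fun a => j ≤ f a)).card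
      = (s.filter (fun a => f a = j)).card + (s.filter (fun a => j + 1 ≤ f a)).card := by
  rw [← Finset.card_union_of_disjoint]
  · congr 1
    ext a
    simp only [Finset.mem_union, mem_filter]
    constructor
    · rintro ⟨ha, h2⟩
      by_cases h : f a = j
      · exact Or.inl ⟨ha, h⟩
      · exact Or.inr ⟨ha, by omega⟩
    · rintro (⟨ha, h2⟩ | ⟨ha, h2⟩) <;> exact ⟨ha, by omega⟩
  · rw [Finset.disjoint_filter]
    intro a _ h1 h2
    omega

end S19


theorem stmt19 (m : ℕ) (hm : 2 ≤ m) (n : ℕ) (hn : 1 ≤ n) (k : ℕ) (hk2 : 2 ≤ k)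
    (hkm : k ≤ m) (j : ℕ) :
    ((PK m n).filter (fun p => freq k p = j)).card =
      ((PK m n).filter (fun p => luck m p = j + 1)).card := by
  have hm1 : 1 ≤ m := by omega
  have master : ∀ j' : ℕ, ((PK m n).filter (fun p => j' ≤ freq k p)).card
      = ((PK m n).filter (fun p => j' + 1 ≤ luck m p)).card := by
    intro j'
    show (S19.Fk m k n j').card = (S19.Fl m n (j' + 1)).card
    by_cases hj' : j' < n
    · obtain ⟨d, rfl⟩ : ∃ d, n = j' + 1 + d := ⟨n - j' - 1, by omega⟩
      have h1 := (S19.T_card_eq_Fk m k j' d hk2 hkm).symm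
      have h2 := S19.Llem m hm1 (j' + 1) (by omega) d
      exact h1.trans h2.symm
    · rw [S19.Fk_empty m k n j' hk2 hn (by omega), S19.Fl_empty m n (j' + 1) (by omega)]
  have hsplitA := S19.card_split (PK m n) (fun p => freq k p) j
  have hsplitB := S19.card_split (PK m n) (fun p => luck m p) (j + 1)
  have e1 := master j
  have e2 := master (j + 1)
  omega


end
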